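/- arXiv:2202.05801 — 2 statements merged into one kernel-verified Lean document; each statement's English description precedes it below -/
import Mathlib

section
/- Fix an oriented line L ⊂ ℝ^d with orthogonal projection q: ℝ^d → L, and for j ∈ {0,…,2n}, t ∈ {1,…,m} let A_{j,t} ⊂ 𝒞 = F(ℝ^d, n+m) ×_{F(ℝ^d,m)} F(ℝ^d, n+m) be the set of configurations C = (z_1,…,z_n, z'_1,…,z'_n, o_1,…,o_m) such that the set of projection points {q(z_i), q(z'_i), q(o_j)} has cardinality j + t and the set {q(o_1),…,q(o_m)} has cardinality t. Then the closure of A_{j,t} in 𝒞 is contained in the union of the sets A_{j',t'} over j' ≤ j and t' ≤ t; consequently, for each c, every set A_{j,t} with j + t = c is both open and closed in W_c = ∪_{j+t=c} A_{j,t}. -/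
open scoped RealInnerProductSpace

/-- The ambient space of configurations `(z₁, …, z_n, z'₁, …, z'_n, o₁, …, o_m)`
of `n` initial robots, `n` desired robots and `m` obstacles in `ℝ^d`. -/
abbrev ConfigVec (d n m : ℕ) : Type :=
  (Fin n → EuclideanSpace ℝ (Fin d)) × (Fin n → EuclideanSpace ℝ (Fin d)) ×
    (Fin m → EuclideanSpace ℝ (Fin d))

/-- The space `𝒞 = E ×_B E` of the Fadell–Neuwirth fibration: both
`(z₁, …, z_n, o₁, …, o_m)` and `(z'₁, …, z'_n, o₁, …, o_m)` consist of pairwise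
distinct points. -/
def ConfigSpace (d n m : ℕ) : Set (ConfigVec d n m) :=
  {v | Function.Injective (Sum.elim v.1 v.2.2) ∧ Function.Injective (Sum.elim v.2.1 v.2.2)}

/-- The list of the `2n + m` projections `q(z_i), q(z'_i), q(o_j)` of a configuration
onto the oriented line with unit direction `e` (identified with `ℝ`, preserving order). -/
noncomputable def allProj {d n m : ℕ} (e : EuclideanSpace ℝ (Fin d)) (v : ConfigVec d n m) :
    Fin n ⊕ Fin n ⊕ Fin m → ℝ :=
  Sum.elim (fun i => ⟪v.1 i, e⟫)
    (Sum.elim (fun i => ⟪v.2.1 i, e⟫) (fun j => ⟪v.2.2 j, e⟫))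

/-- The subset `A_{j,t} ⊆ 𝒞`: configurations whose set of projection points has
cardinality `j + t` and whose set of projected obstacles has cardinality `t`. -/
noncomputable def stratum (d n m : ℕ) (e : EuclideanSpace ℝ (Fin d)) (j t : ℕ) :
    Set ↥(ConfigSpace d n m) :=
  {v | (Set.range (allProj e (v : ConfigVec d n m))).ncard = j + t ∧
    (Set.range fun k : Fin m => ⟪(v : ConfigVec d n m).2.2 k, e⟫).ncard = t}

/-- The set `W_c = ⋃_{j+t=c} A_{j,t}` (with `0 ≤ j ≤ 2n`, `1 ≤ t ≤ m`). -/
noncomputable def aggregate (d n m : ℕ) (e : EuclideanSpace ℝ (Fin d)) (c : ℕ) :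
    Set ↥(ConfigSpace d n m) :=
  ⋃ (j : ℕ) (t : ℕ) (_ : j + t = c ∧ j ≤ 2 * n ∧ 1 ≤ t ∧ t ≤ m), stratum d n m e j t

section Aux

variable {X : Type*} [TopologicalSpace X] {ι κ : Type*} [Finite ι] [Finite κ]

/-- The set of points where the range of a continuous finite family, with the range of a
second continuous finite family removed, has at least `k` elements is open. -/
lemma aux_isOpen_le_ncard_diff (f : X → ι → ℝ) (h : X → κ → ℝ)
    (hf : ∀ i, Continuous fun x => f x i) (hh : ∀ l, Continuous fun x => h x l) (k : ℕ) :
    IsOpen {x | k ≤ (Set.range (f x) \ Set.range (h x)).ncard} := by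
  rw [isOpen_iff_forall_mem_open]
  intro x₀ hx₀
  obtain ⟨T, hTsub, hTcard⟩ := Set.exists_subset_card_eq hx₀
  have hTfin : T.Finite := (((Set.finite_range (f x₀)).diff).subset hTsub)
  have hcard : hTfin.toFinset.card = k := by
    rw [← Set.ncard_eq_toFinset_card T hTfin]; exact hTcard
  set w : Fin k → ℝ := fun a => ((hTfin.toFinset.orderIsoOfFin hcard) a : ℝ) with hw
  have hw_inj : Function.Injective w := fun a b hab => by
    have := (hTfin.toFinset.orderIsoOfFin hcard).injective (Subtype.ext hab)
    exact this
  have hwT : ∀ a, w a ∈ T := fun a =>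
    hTfin.mem_toFinset.mp ((hTfin.toFinset.orderIsoOfFin hcard) a).2
  have hwD : ∀ a, w a ∈ Set.range (f x₀) \ Set.range (h x₀) := fun a => hTsub (hwT a)
  have hex : ∀ a, ∃ i, f x₀ i = w a := fun a => (hwD a).1
  choose g hg using hex
  refine ⟨{x | (∀ a b : Fin k, a ≠ b → f x (g a) ≠ f x (g b)) ∧
      ∀ (a : Fin k) (l : κ), f x (g a) ≠ h x l}, ?_, ?_, ?_, ?_⟩
  · -- the open set is contained in the level set
    rintro x ⟨hx1, hx2⟩
    have hss : Set.range (fun a : Fin k => f x (g a)) ⊆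
        Set.range (f x) \ Set.range (h x) := by
      rintro y ⟨a, rfl⟩
      exact ⟨⟨g a, rfl⟩, fun ⟨l, hl⟩ => hx2 a l hl.symm⟩
    have hinj : Function.Injective fun a : Fin k => f x (g a) := by
      intro a b hab
      by_contra hne
      exact hx1 a b hne hab
    have hkcard : (Set.range fun a : Fin k => f x (g a)).ncard = k := by
      rw [← Set.image_univ, Set.ncard_image_of_injective _ hinj, Set.ncard_univ,
        Nat.card_eq_fintype_card, Fintype.card_fin]
    calc k = (Set.range fun a : Fin k => f x (g a)).ncard := hkcard.symm
      _ ≤ _ := Set.ncard_le_ncard hss ((Set.finite_range (f x)).diff)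
  · -- openness
    have : {x | (∀ a b : Fin k, a ≠ b → f x (g a) ≠ f x (g b)) ∧
        ∀ (a : Fin k) (l : κ), f x (g a) ≠ h x l} =
        (⋂ (a : Fin k) (b : Fin k), ⋂ (_ : a ≠ b), {x | f x (g a) ≠ f x (g b)}) ∩
          ⋂ (a : Fin k) (l : κ), {x | f x (g a) ≠ h x l} := by
      ext x
      simp only [Set.mem_inter_iff, Set.mem_iInter, Set.mem_setOf_eq]
    rw [this]
    refine IsOpen.inter ?_ ?_
    · exact isOpen_iInter_of_finite fun a => isOpen_iInter_of_finite fun b =>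
        isOpen_iInter_of_finite fun _ => isOpen_ne_fun (hf (g a)) (hf (g b))
    · exact isOpen_iInter_of_finite fun a => isOpen_iInter_of_finite fun l =>
        isOpen_ne_fun (hf (g a)) (hh l)
  · -- membership of x₀ : pairwise distinctness
    intro a b hab
    rw [hg a, hg b]
    exact fun hcon => hab (hw_inj hcon)
  · -- membership of x₀ : distinct from obstacle values
    intro a l
    rw [hg a]
    exact fun hcon => (hwD a).2 ⟨l, hcon.symm⟩

end Aux

/-- **Statement 12.** The closure (in `𝒞`) of the stratum `A_{j,t}` is contained in the
union of the strata `A_{j',t'}` over `j' ≤ j` and `t' ≤ t`; consequently each `A_{j,t}`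
with `j + t = c` is both open and closed in `W_c = ⋃_{j+t=c} A_{j,t}`. -/
theorem closure_stratum_subset (d n m : ℕ) (hd : 2 ≤ d)
    (e : EuclideanSpace ℝ (Fin d)) (he : ‖e‖ = 1) :
    (∀ j t : ℕ, j ≤ 2 * n → 1 ≤ t → t ≤ m →
      closure (stratum d n m e j t) ⊆
        ⋃ (j' : ℕ) (t' : ℕ) (_ : j' ≤ j ∧ t' ≤ t), stratum d n m e j' t') ∧
    (∀ c j t : ℕ, j + t = c → j ≤ 2 * n → 1 ≤ t → t ≤ m →
      IsOpen (Subtype.val ⁻¹' (stratum d n m e j t) : Set ↥(aggregate d n m e c)) ∧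
      IsClosed (Subtype.val ⁻¹' (stratum d n m e j t) : Set ↥(aggregate d n m e c))) := by
  classical
  set X := ↥(ConfigSpace d n m)
  set F : X → (Fin n ⊕ Fin n ⊕ Fin m) → ℝ := fun v => allProj e (v : ConfigVec d n m) with hF
  set H : X → Fin m → ℝ := fun v k => ⟪(v : ConfigVec d n m).2.2 k, e⟫ with hH
  set H' : X → Empty → ℝ := fun _ l => l.elim with hH'
  -- continuity of the coordinates
  have hcF : ∀ i, Continuous fun x : X => F x i := by
    rintro (i | i | i)
    · exact (((continuous_apply i).comp continuous_fst).comp continuous_subtype_val).inner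
        continuous_const
    · exact ((((continuous_apply i).comp continuous_fst).comp continuous_snd).comp
        continuous_subtype_val).inner continuous_const
    · exact ((((continuous_apply i).comp continuous_snd).comp continuous_snd).comp
        continuous_subtype_val).inner continuous_const
  have hcH : ∀ l, Continuous fun x : X => H x l := fun l => hcF (Sum.inr (Sum.inr l))
  have hsub : ∀ x : X, Set.range (H x) ⊆ Set.range (F x) := by
    rintro x y ⟨l, rfl⟩
    exact ⟨Sum.inr (Sum.inr l), rfl⟩
  -- the two count functions
  set Jf : X → ℕ := fun x => (Set.range (F x) \ Set.range (H x)).ncard with hJf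
  set Tf : X → ℕ := fun x => (Set.range (H x)).ncard with hTf
  have hFfin : ∀ x : X, (Set.range (F x)).Finite := fun x => Set.finite_range _
  have hid : ∀ x : X, (Set.range (F x)).ncard = Jf x + Tf x := by
    intro x
    rw [hJf, hTf]
    exact (Set.ncard_diff_add_ncard_of_subset (hsub x) (hFfin x)).symm
  -- characterization of the strata
  have hchar : ∀ (j t : ℕ) (x : X),
      x ∈ stratum d n m e j t ↔ Jf x = j ∧ Tf x = t := by
    intro j t x
    unfold stratum
    show _ ∧ _ ↔ _
    constructor
    · rintro ⟨h1, h2⟩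
      have h1' : (Set.range (F x)).ncard = j + t := h1
      have h2' : Tf x = t := h2
      have := hid x
      exact ⟨by omega, h2'⟩
    · rintro ⟨h1, h2⟩
      have := hid x
      refine ⟨?_, h2⟩
      show (Set.range (F x)).ncard = j + t
      omega
  -- the key closure estimate
  have hlsJ : ∀ k : ℕ, IsOpen {x : X | k ≤ Jf x} :=
    fun k => aux_isOpen_le_ncard_diff F H hcF hcH k
  have hlsT : ∀ k : ℕ, IsOpen {x : X | k ≤ Tf x} := by
    intro k
    have := aux_isOpen_le_ncard_diff H H' hcH (fun l => l.elim) k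
    have heq : {x : X | k ≤ (Set.range (H x) \ Set.range (H' x)).ncard} = {x : X | k ≤ Tf x} := by
      ext x
      simp only [Set.mem_setOf_eq, Set.range_eq_empty (H' x), Set.diff_empty]
      exact Iff.rfl
    rwa [heq] at this
  have hclos : ∀ j t : ℕ, closure (stratum d n m e j t) ⊆
      {x : X | Jf x ≤ j} ∩ {x : X | Tf x ≤ t} := by
    intro j t
    apply closure_minimal
    · intro x hx
      rw [hchar] at hx
      exact ⟨le_of_eq hx.1, le_of_eq hx.2⟩
    · refine IsClosed.inter ?_ ?_
      · have : {x : X | Jf x ≤ j} = {x : X | j + 1 ≤ Jf x}ᶜ := by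
          ext x; simp only [Set.mem_compl_iff, Set.mem_setOf_eq]; omega
        rw [this]; exact (hlsJ (j + 1)).isClosed_compl
      · have : {x : X | Tf x ≤ t} = {x : X | t + 1 ≤ Tf x}ᶜ := by
          ext x; simp only [Set.mem_compl_iff, Set.mem_setOf_eq]; omega
        rw [this]; exact (hlsT (t + 1)).isClosed_compl
  have part1 : ∀ j t : ℕ, closure (stratum d n m e j t) ⊆
      ⋃ (j' : ℕ) (t' : ℕ) (_ : j' ≤ j ∧ t' ≤ t), stratum d n m e j' t' := by
    intro j t x hx
    obtain ⟨h1, h2⟩ := hclos j t hx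
    refine Set.mem_iUnion.mpr ⟨Jf x, Set.mem_iUnion.mpr ⟨Tf x, Set.mem_iUnion.mpr
      ⟨⟨h1, h2⟩, ?_⟩⟩⟩
    rw [hchar]
    exact ⟨rfl, rfl⟩
  -- part 2: closedness
  have hagg : ∀ (c : ℕ) (x : ↥(aggregate d n m e c)), ∃ j₀ t₀ : ℕ,
      j₀ + t₀ = c ∧ (x : X) ∈ stratum d n m e j₀ t₀ := by
    intro c x
    have := x.2
    unfold aggregate at this
    simp only [Set.mem_iUnion] at this
    obtain ⟨j₀, t₀, ⟨hc, _⟩, hmem⟩ := this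
    exact ⟨j₀, t₀, hc, hmem⟩
  have hclosed : ∀ c j t : ℕ, j + t = c →
      IsClosed (Subtype.val ⁻¹' (stratum d n m e j t) : Set ↥(aggregate d n m e c)) := by
    intro c j t hc
    have hkey : (Subtype.val ⁻¹' (stratum d n m e j t) : Set ↥(aggregate d n m e c)) =
        Subtype.val ⁻¹' ({x : X | Jf x ≤ j} ∩ {x : X | Tf x ≤ t}) := by
      ext x
      simp only [Set.mem_preimage]
      constructor
      · intro hx
        rw [hchar] at hx
        exact ⟨le_of_eq hx.1, le_of_eq hx.2⟩
      · rintro ⟨h1, h2⟩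
        have h1' : Jf (x : X) ≤ j := h1
        have h2' : Tf (x : X) ≤ t := h2
        obtain ⟨j₀, t₀, hc₀, hmem⟩ := hagg c x
        rw [hchar] at hmem ⊢
        omega
    rw [hkey]
    refine IsClosed.preimage continuous_subtype_val ?_
    refine IsClosed.inter ?_ ?_
    · have : {x : X | Jf x ≤ j} = {x : X | j + 1 ≤ Jf x}ᶜ := by
        ext x; simp only [Set.mem_compl_iff, Set.mem_setOf_eq]; omega
      rw [this]; exact (hlsJ (j + 1)).isClosed_compl
    · have : {x : X | Tf x ≤ t} = {x : X | t + 1 ≤ Tf x}ᶜ := by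
        ext x; simp only [Set.mem_compl_iff, Set.mem_setOf_eq]; omega
      rw [this]; exact (hlsT (t + 1)).isClosed_compl
  refine ⟨fun j t _ _ _ => part1 j t, fun c j t hc hj ht1 htm => ⟨?_, hclosed c j t hc⟩⟩
  -- openness: the complement is a finite union of closed sets
  rw [← isClosed_compl_iff]
  have hcompl : (Subtype.val ⁻¹' (stratum d n m e j t) : Set ↥(aggregate d n m e c))ᶜ =
      ⋃ j' : Fin (c + 1), (if (j' : ℕ) = j then (∅ : Set ↥(aggregate d n m e c))
        else Subtype.val ⁻¹' (stratum d n m e (j' : ℕ) (c - (j' : ℕ)))) := by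
    ext x
    simp only [Set.mem_compl_iff, Set.mem_preimage, Set.mem_iUnion]
    constructor
    · intro hx
      obtain ⟨j₀, t₀, hc₀, hmem⟩ := hagg c x
      have hj₀ : j₀ ≠ j := by
        intro hcon
        apply hx
        have : t₀ = t := by omega
        rw [hcon, this] at hmem
        exact hmem
      have hj₀c : j₀ < c + 1 := by omega
      refine ⟨⟨j₀, hj₀c⟩, ?_⟩
      rw [if_neg hj₀]
      have : c - j₀ = t₀ := by omega
      rw [this]
      exact hmem
    · rintro ⟨j', hj'⟩ hx
      by_cases hcase : (j' : ℕ) = j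
      · rw [if_pos hcase] at hj'
        exact hj'
      · rw [if_neg hcase] at hj'
        have h1 := (hchar (j' : ℕ) (c - (j' : ℕ)) (x : X)).mp hj'
        have h2 := (hchar j t (x : X)).mp hx
        omega
  rw [hcompl]
  refine isClosed_iUnion_of_finite fun j' => ?_
  by_cases hcase : (j' : ℕ) = j
  · rw [if_pos hcase]; exact isClosed_empty
  · rw [if_neg hcase]
    refine hclosed c (j' : ℕ) (c - (j' : ℕ)) ?_
    have := j'.2
    omega
end

section
/- Let L ⊂ ℝ^d be an oriented line with orthogonal projection q: ℝ^d → L, and let z_1,…,z_n, z'_1,…,z'_n, o_1,…,o_m ∈ ℝ^d be points such that the projections q(z_1),…,q(z_n), q(o_1),…,q(o_m) are pairwise distinct, the projections q(z'_1),…,q(z'_n), q(o_1),…,q(o_m) are pairwise distinct, and the two lists have the same relative ordering on L (that is, for i ≠ j, q(z_i) < q(z_j) iff q(z'_i) < q(z'_j), and for all i, ℓ, q(z_i) < q(o_ℓ) iff q(z'_i) < q(o_ℓ)). Then the straight-line homotopy z_i(t) = (1−t)z_i + t z'_i, t ∈ [0,1], satisfies: for every t ∈ [0,1], the points z_1(t),…,z_n(t),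 o_1,…,o_m are pairwise distinct. In particular the affine deformation defines a collision-free motion of the n robots from (z_1,…,z_n) to (z'_1,…,z'_n) avoiding the obstacles o_1,…,o_m. -/
open scoped RealInnerProductSpace

/-- **Statement 13.** Let `L ⊂ ℝ^d` be an oriented line, identified via its unit direction
vector `e`, so that the orthogonal projection to `L` corresponds (in an order-preserving way)
to the map `x ↦ ⟪x, e⟫`. Suppose the projections of the initial robots `z i` together with the
obstacles `o ℓ` are pairwise distinct, the projections of the desired robots `z' i` together
with the obstacles are pairwise distinct, and the two lists occur in the same relative order.
Then the straight-line homotopy `zᵢ(t) = (1 - t) zᵢ + t z'ᵢ` is collision-free: for each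
`t ∈ [0,1]` the points `z₁(t), …, z_n(t), o₁, …, o_m` are pairwise distinct. -/
theorem straight_line_homotopy_collision_free
    (d n m : ℕ) (e : EuclideanSpace ℝ (Fin d)) (he : ‖e‖ = 1)
    (z z' : Fin n → EuclideanSpace ℝ (Fin d)) (o : Fin m → EuclideanSpace ℝ (Fin d))
    (h₁ : Function.Injective
      (Sum.elim (fun i => ⟪z i, e⟫) (fun ℓ => ⟪o ℓ, e⟫) : Fin n ⊕ Fin m → ℝ))
    (h₂ : Function.Injective
      (Sum.elim (fun i => ⟪z' i, e⟫) (fun ℓ => ⟪o ℓ, e⟫) : Fin n ⊕ Fin m → ℝ))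
    (horder : ∀ a b : Fin n ⊕ Fin m,
      (Sum.elim (fun i => ⟪z i, e⟫) (fun ℓ => ⟪o ℓ, e⟫) a <
        Sum.elim (fun i => ⟪z i, e⟫) (fun ℓ => ⟪o ℓ, e⟫) b) ↔
      (Sum.elim (fun i => ⟪z' i, e⟫) (fun ℓ => ⟪o ℓ, e⟫) a <
        Sum.elim (fun i => ⟪z' i, e⟫) (fun ℓ => ⟪o ℓ, e⟫) b)) :
    ∀ t ∈ Set.Icc (0 : ℝ) 1,
      Function.Injective
        (Sum.elim (fun i => (1 - t) • z i + t • z' i) o : Fin n ⊕ Fin m → EuclideanSpace ℝ (Fin d)) := by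
  intro t ht
  set F : Fin n ⊕ Fin m → ℝ := Sum.elim (fun i => ⟪z i, e⟫) (fun ℓ => ⟪o ℓ, e⟫) with hF
  set F' : Fin n ⊕ Fin m → ℝ := Sum.elim (fun i => ⟪z' i, e⟫) (fun ℓ => ⟪o ℓ, e⟫) with hF'
  obtain ⟨ht0, ht1⟩ := ht
  -- key fact: the projection of the point at time t is the convex combination
  have hproj : ∀ a : Fin n ⊕ Fin m,
      ⟪(Sum.elim (fun i => (1 - t) • z i + t • z' i) o : Fin n ⊕ Fin m →
        EuclideanSpace ℝ (Fin d)) a, e⟫ = (1 - t) * F a + t * F' a := by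
    rintro (i | ℓ)
    · simp [hF, hF', inner_add_left, real_inner_smul_left, Finset.mul_sum, mul_assoc]
    · simp [hF, hF']; ring
  -- convex combination preserves strict order
  have key : ∀ a b : Fin n ⊕ Fin m, F a < F b →
      (1 - t) * F a + t * F' a < (1 - t) * F b + t * F' b := by
    intro a b hab
    have hab' : F' a < F' b := (horder a b).mp hab
    rcases lt_or_eq_of_le ht0 with h | h
    · have h1 : (1 - t) * F a ≤ (1 - t) * F b :=
        mul_le_mul_of_nonneg_left hab.le (by linarith)
      have h2 : t * F' a < t * F' b := by
        exact (mul_lt_mul_iff_right₀ h).mpr hab'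
      linarith
    · have h1 : (1 - t) * F a < (1 - t) * F b := by
        have : (0:ℝ) < 1 - t := by linarith
        exact (mul_lt_mul_iff_right₀ this).mpr hab
      have h2 : t * F' a ≤ t * F' b :=
        mul_le_mul_of_nonneg_left hab'.le ht0
      linarith
  intro a b hab
  by_contra hne
  have hFne : F a ≠ F b := fun h => hne (h₁ h)
  have : ⟪(Sum.elim (fun i => (1 - t) • z i + t • z' i) o : Fin n ⊕ Fin m →
      EuclideanSpace ℝ (Fin d)) a, e⟫ =
      ⟪(Sum.elim (fun i => (1 - t) • z i + t • z' i) o : Fin n ⊕ Fin m →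
      EuclideanSpace ℝ (Fin d)) b, e⟫ := by rw [hab]
  rw [hproj a, hproj b] at this
  rcases hFne.lt_or_gt with h | h
  · exact absurd this (key a b h).ne
  · exact absurd this.symm (key b a h).ne
end
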